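/- arXiv:1710.06655 — 3 statements merged into one kernel-verified Lean document; each statement's English description precedes it below -/
import Mathlib

section
/- Let σ₁ > 0, σ₂ > 0, and f(x, φ) = (1/√(2π(σ₁² + φ·σ₂²)))·exp(−x²/(2(σ₁² + φ·σ₂²))) for φ ∈ {0,1}. Then for real x_m, x_n: if x_m² < x_n² then f(x_m,0)·f(x_n,1) > f(x_m,1)·f(x_n,0); if x_m² = x_n² then equality holds; and if x_m² > x_n² then f(x_m,0)·f(x_n,1) < f(x_m,1)·f(x_n,0). -/
open Real

theorem stmt_1 (σ₁ σ₂ : ℝ) (hσ₁ : 0 < σ₁) (hσ₂ : 0 < σ₂)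
    (f : ℝ → ℝ → ℝ)
    (hf : ∀ x φ, f x φ =
      (Real.sqrt (2 * Real.pi * (σ₁ ^ 2 + φ * σ₂ ^ 2)))⁻¹ *
        Real.exp (-(x ^ 2) / (2 * (σ₁ ^ 2 + φ * σ₂ ^ 2))))
    (xm xn : ℝ) :
    (xm ^ 2 < xn ^ 2 → f xm 0 * f xn 1 > f xm 1 * f xn 0) ∧
    (xm ^ 2 = xn ^ 2 → f xm 0 * f xn 1 = f xm 1 * f xn 0) ∧
    (xm ^ 2 > xn ^ 2 → f xm 0 * f xn 1 < f xm 1 * f xn 0) := by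
  set a : ℝ := σ₁ ^ 2 with ha
  set b : ℝ := σ₁ ^ 2 + σ₂ ^ 2 with hb
  have ha0 : 0 < a := by positivity
  have hb0 : 0 < b := by positivity
  have hab : a < b := by nlinarith
  have hc : 0 < (Real.sqrt (2 * Real.pi * a))⁻¹ * (Real.sqrt (2 * Real.pi * b))⁻¹ := by
    have := Real.pi_pos
    positivity
  set c : ℝ := (Real.sqrt (2 * Real.pi * a))⁻¹ * (Real.sqrt (2 * Real.pi * b))⁻¹ with hcdef
  have key : ∀ u v : ℝ,
      f u 0 * f v 1 = c * Real.exp (-(u ^ 2) / (2 * a) + -(v ^ 2) / (2 * b)) := by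
    intro u v
    rw [hf, hf]
    simp only [zero_mul, one_mul, add_zero]
    rw [show ((√(2 * π * a))⁻¹ * rexp (-u ^ 2 / (2 * a)) *
        ((√(2 * π * (a + σ₂ ^ 2)))⁻¹ * rexp (-v ^ 2 / (2 * (a + σ₂ ^ 2)))))
      = ((√(2 * π * a))⁻¹ * (√(2 * π * (a + σ₂ ^ 2)))⁻¹) *
        (rexp (-u ^ 2 / (2 * a)) * rexp (-v ^ 2 / (2 * (a + σ₂ ^ 2)))) by ring,
      ← Real.exp_add]
  have e1 : f xm 0 * f xn 1 = c * Real.exp (-(xm ^ 2) / (2 * a) + -(xn ^ 2) / (2 * b)) :=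
    key xm xn
  have e2 : f xm 1 * f xn 0 = c * Real.exp (-(xn ^ 2) / (2 * a) + -(xm ^ 2) / (2 * b)) := by
    rw [mul_comm]; exact key xn xm
  refine ⟨fun h => ?_, fun h => ?_, fun h => ?_⟩
  · rw [e1, e2]
    apply mul_lt_mul_of_pos_left _ hc
    apply Real.exp_lt_exp.mpr
    rw [div_add_div _ _ (by positivity : (2*a:ℝ) ≠ 0) (by positivity : (2*b:ℝ) ≠ 0),
      div_add_div _ _ (by positivity : (2*a:ℝ) ≠ 0) (by positivity : (2*b:ℝ) ≠ 0),
      div_lt_div_iff₀ (by positivity) (by positivity)]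
    nlinarith [mul_pos (mul_pos (sub_pos.mpr h) (sub_pos.mpr hab)) (mul_pos ha0 hb0)]
  · rw [e1, e2, h]
  · rw [e1, e2]
    apply mul_lt_mul_of_pos_left _ hc
    apply Real.exp_lt_exp.mpr
    rw [div_add_div _ _ (by positivity : (2*a:ℝ) ≠ 0) (by positivity : (2*b:ℝ) ≠ 0),
      div_add_div _ _ (by positivity : (2*a:ℝ) ≠ 0) (by positivity : (2*b:ℝ) ≠ 0),
      div_lt_div_iff₀ (by positivity) (by positivity)]
    nlinarith [mul_pos (mul_pos (sub_pos.mpr h) (sub_pos.mpr hab)) (mul_pos ha0 hb0)]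
end

section
/- Let σ₁, σ₂ > 0, ρ ∈ (0,1), and x : Fin N → ℝ with all |x n| distinct. If φ̂ : Fin N → {0,1} maximizes the likelihood L(φ) = (∏ n, ρ^{φ n}·(1−ρ)^{1−φ n}·f(x n, φ n)), then there exists a threshold T ∈ ℝ such that φ̂ n = 1 if and only if |x n| ≥ T (or φ̂ is identically 0). -/
open Real Finset

theorem stmt_3 (N : ℕ) (σ₁ σ₂ ρ : ℝ) (hσ₁ : 0 < σ₁) (hσ₂ : 0 < σ₂)
    (hρ : ρ ∈ Set.Ioo (0 : ℝ) 1)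
    (x : Fin N → ℝ) (hdist : Function.Injective (fun n => |x n|))
    (f : ℝ → ℝ → ℝ)
    (hf : ∀ x' φ, f x' φ =
      (Real.sqrt (2 * Real.pi * (σ₁ ^ 2 + φ * σ₂ ^ 2)))⁻¹ *
        Real.exp (-(x' ^ 2) / (2 * (σ₁ ^ 2 + φ * σ₂ ^ 2))))
    (L : (Fin N → Fin 2) → ℝ)
    (hL : ∀ φ, L φ =
      ∏ n, ρ ^ (φ n : ℕ) * (1 - ρ) ^ (1 - (φ n : ℕ)) * f (x n) ((φ n : ℕ) : ℝ))
    (phiHat : Fin N → Fin 2) (hmax : ∀ ψ, L ψ ≤ L phiHat) :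
    (∃ T : ℝ, ∀ n, phiHat n = 1 ↔ T ≤ |x n|) ∨ (∀ n, phiHat n = 0) := by
  obtain ⟨hρ0, hρ1⟩ := hρ
  set t : Fin N → Fin 2 → ℝ :=
    fun a v => ρ ^ (v : ℕ) * (1 - ρ) ^ (1 - (v : ℕ)) * f (x a) ((v : ℕ) : ℝ) with ht
  have hLt : ∀ φ, L φ = ∏ k, t k (φ k) := fun φ => hL φ
  have hv0 : (0:ℝ) < σ₁ ^ 2 := by positivity
  have hv1 : (0:ℝ) < σ₁ ^ 2 + σ₂ ^ 2 := by positivity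
  have hfpos0 : ∀ a, 0 < f (x a) 0 := by
    intro a; rw [hf]
    have : (0:ℝ) < 2 * Real.pi * (σ₁ ^ 2 + 0 * σ₂ ^ 2) := by
      have := Real.pi_pos; nlinarith
    positivity
  have hfpos1 : ∀ a, 0 < f (x a) 1 := by
    intro a; rw [hf]
    have : (0:ℝ) < 2 * Real.pi * (σ₁ ^ 2 + 1 * σ₂ ^ 2) := by
      have := Real.pi_pos; nlinarith
    positivity
  have tpos : ∀ a (v : Fin 2), 0 < t a v := by
    intro a v
    fin_cases v
    · simp only [ht]; norm_num; nlinarith [hfpos0 a]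
    · simp only [ht]; norm_num; nlinarith [hfpos1 a]
  -- key pairwise inequality
  have key : ∀ n m : Fin N, |x n| < |x m| →
      t n 1 * t m 0 < t n 0 * t m 1 := by
    intro n m hlt
    have hsq : (x n) ^ 2 < (x m) ^ 2 := by
      have := abs_nonneg (x n)
      nlinarith [sq_abs (x n), sq_abs (x m)]
    have c0 : (0:ℝ) < (Real.sqrt (2 * Real.pi * (σ₁ ^ 2 + 0 * σ₂ ^ 2)))⁻¹ := by
      have : (0:ℝ) < 2 * Real.pi * (σ₁ ^ 2 + 0 * σ₂ ^ 2) := by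
        have := Real.pi_pos; nlinarith
      positivity
    have c1 : (0:ℝ) < (Real.sqrt (2 * Real.pi * (σ₁ ^ 2 + 1 * σ₂ ^ 2)))⁻¹ := by
      have : (0:ℝ) < 2 * Real.pi * (σ₁ ^ 2 + 1 * σ₂ ^ 2) := by
        have := Real.pi_pos; nlinarith
      positivity
    have hC : (0:ℝ) < ρ * (1 - ρ) *
        ((Real.sqrt (2 * Real.pi * (σ₁ ^ 2 + 0 * σ₂ ^ 2)))⁻¹ *
          (Real.sqrt (2 * Real.pi * (σ₁ ^ 2 + 1 * σ₂ ^ 2)))⁻¹) := by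
      have h1 : (0:ℝ) < 1 - ρ := by linarith
      positivity
    have hexp : (-(x n ^ 2) / (2 * (σ₁ ^ 2 + 1 * σ₂ ^ 2)) +
          -(x m ^ 2) / (2 * (σ₁ ^ 2 + 0 * σ₂ ^ 2))) <
        (-(x n ^ 2) / (2 * (σ₁ ^ 2 + 0 * σ₂ ^ 2)) +
          -(x m ^ 2) / (2 * (σ₁ ^ 2 + 1 * σ₂ ^ 2))) := by
      rw [div_add_div _ _ (by nlinarith) (by nlinarith),
          div_add_div _ _ (by nlinarith) (by nlinarith),
          div_lt_div_iff₀ (by nlinarith) (by nlinarith)]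
      nlinarith [mul_pos (mul_pos (sub_pos.2 hsq) (pow_pos hσ₂ 2)) (mul_pos hv0 hv1)]
    have e1 : t n 1 * t m 0 = (ρ * (1 - ρ) *
        ((Real.sqrt (2 * Real.pi * (σ₁ ^ 2 + 0 * σ₂ ^ 2)))⁻¹ *
          (Real.sqrt (2 * Real.pi * (σ₁ ^ 2 + 1 * σ₂ ^ 2)))⁻¹)) *
        Real.exp (-(x n ^ 2) / (2 * (σ₁ ^ 2 + 1 * σ₂ ^ 2)) +
          -(x m ^ 2) / (2 * (σ₁ ^ 2 + 0 * σ₂ ^ 2))) := by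
      simp only [ht, hf, Fin.val_one, Fin.val_zero, pow_one, pow_zero,
        Nat.cast_one, Nat.cast_zero, Real.exp_add]
      ring
    have e2 : t n 0 * t m 1 = (ρ * (1 - ρ) *
        ((Real.sqrt (2 * Real.pi * (σ₁ ^ 2 + 0 * σ₂ ^ 2)))⁻¹ *
          (Real.sqrt (2 * Real.pi * (σ₁ ^ 2 + 1 * σ₂ ^ 2)))⁻¹)) *
        Real.exp (-(x n ^ 2) / (2 * (σ₁ ^ 2 + 0 * σ₂ ^ 2)) +
          -(x m ^ 2) / (2 * (σ₁ ^ 2 + 1 * σ₂ ^ 2))) := by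
      simp only [ht, hf, Fin.val_one, Fin.val_zero, pow_one, pow_zero,
        Nat.cast_one, Nat.cast_zero, Real.exp_add]
      ring
    rw [e1, e2]
    exact mul_lt_mul_of_pos_left (Real.exp_lt_exp.2 hexp) hC
  -- monotone property of phiHat
  have mono : ∀ n m : Fin N, phiHat n = 1 → |x n| ≤ |x m| → phiHat m = 1 := by
    intro n m hn hle
    by_contra hm1
    have hm : phiHat m = 0 := by omega
    have hne : n ≠ m := by
      intro h; rw [h, hm] at hn; exact absurd hn (by decide)
    have hlt : |x n| < |x m| := by
      rcases lt_or_eq_of_le hle with h | h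
      · exact h
      · exact absurd (hdist h) hne
    set ψ : Fin N → Fin 2 :=
      fun k => if k = n then phiHat m else if k = m then phiHat n else phiHat k with hψ
    have hme : m ∈ Finset.univ.erase n := Finset.mem_erase.2 ⟨Ne.symm hne, Finset.mem_univ m⟩
    have split : ∀ g : Fin N → Fin 2, ∏ k, t k (g k) =
        t n (g n) * (t m (g m) * ∏ k ∈ (Finset.univ.erase n).erase m, t k (g k)) := by
      intro g
      rw [← Finset.mul_prod_erase Finset.univ (fun k => t k (g k)) (Finset.mem_univ n),
          ← Finset.mul_prod_erase _ (fun k => t k (g k)) hme]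
    have hrest : 0 < ∏ k ∈ (Finset.univ.erase n).erase m, t k (phiHat k) :=
      Finset.prod_pos (fun k _ => tpos k _)
    have hsame : ∏ k ∈ (Finset.univ.erase n).erase m, t k (ψ k) =
        ∏ k ∈ (Finset.univ.erase n).erase m, t k (phiHat k) := by
      apply Finset.prod_congr rfl
      intro k hk
      have hk1 : k ≠ m := (Finset.mem_erase.1 hk).1
      have hk2 : k ≠ n := (Finset.mem_erase.1 (Finset.mem_erase.1 hk).2).1
      simp [hψ, hk1, hk2]
    have hψn : ψ n = 0 := by simp [hψ, hm]
    have hψm : ψ m = 1 := by simp [hψ, Ne.symm hne, hn]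
    have hLψ : L ψ = t n 0 * (t m 1 * ∏ k ∈ (Finset.univ.erase n).erase m, t k (phiHat k)) := by
      rw [hLt, split, hψn, hψm, hsame]
    have hLφ : L phiHat =
        t n 1 * (t m 0 * ∏ k ∈ (Finset.univ.erase n).erase m, t k (phiHat k)) := by
      rw [hLt, split, hn, hm]
    have : L phiHat < L ψ := by
      rw [hLψ, hLφ]
      have := key n m hlt
      calc t n 1 * (t m 0 * ∏ k ∈ (Finset.univ.erase n).erase m, t k (phiHat k))
          = (t n 1 * t m 0) * ∏ k ∈ (Finset.univ.erase n).erase m, t k (phiHat k) := by ring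
        _ < (t n 0 * t m 1) * ∏ k ∈ (Finset.univ.erase n).erase m, t k (phiHat k) :=
            mul_lt_mul_of_pos_right this hrest
        _ = t n 0 * (t m 1 * ∏ k ∈ (Finset.univ.erase n).erase m, t k (phiHat k)) := by ring
    exact absurd (hmax ψ) (not_le.2 this)
  by_cases hall : ∀ n, phiHat n = 0
  · exact Or.inr hall
  · left
    push_neg at hall
    obtain ⟨n0, hn0⟩ := hall
    have hn0' : phiHat n0 = 1 := by omega
    set S := Finset.univ.filter (fun n => phiHat n = 1) with hS
    have hSne : S.Nonempty := ⟨n0, by simp [hS, hn0']⟩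
    refine ⟨S.inf' hSne (fun n => |x n|), fun n => ⟨fun hn1 => ?_, fun hT => ?_⟩⟩
    · exact Finset.inf'_le _ (by simp [hS, hn1])
    · obtain ⟨k, hk, hkeq⟩ := Finset.exists_mem_eq_inf' hSne (fun n => |x n|)
      have hk1 : phiHat k = 1 := (Finset.mem_filter.1 hk).2
      exact mono k n hk1 (by rw [← hkeq]; exact hT)
end

section
/- Let α, β : Fin N → {0,1} differ only at indices m ≠ n with α m = 0, α n = 1, β m = 1, β n = 0, and let σ₁, σ₂ > 0, ρ ∈ (0,1). If |x n| > |x m|, then the full posterior likelihood satisfies L(α) > L(β), where L(φ) = ∏_k ρ^{φ k}·(1−ρ)^{1−φ k}·g(x k; σ₁² + φ k·σ₂²). -/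
open Real Finset

theorem stmt_18 (N : ℕ) (ρ σ₁ σ₂ : ℝ) (hρ : ρ ∈ Set.Ioo (0 : ℝ) 1)
    (hσ₁ : 0 < σ₁) (hσ₂ : 0 < σ₂)
    (x : Fin N → ℝ)
    (α β : Fin N → Fin 2) (m n : Fin N) (hmn : m ≠ n)
    (hαm : α m = 0) (hαn : α n = 1) (hβm : β m = 1) (hβn : β n = 0)
    (hagree : ∀ k, k ≠ m → k ≠ n → α k = β k)
    (hx : |x m| < |x n|)
    (g : ℝ → ℝ → ℝ)
    (hg : ∀ x' v, g x' v = (Real.sqrt (2 * Real.pi * v))⁻¹ * Real.exp (-(x' ^ 2) / (2 * v)))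
    (L : (Fin N → Fin 2) → ℝ)
    (hL : ∀ φ, L φ = ∏ k, ρ ^ (φ k : ℕ) * (1 - ρ) ^ (1 - (φ k : ℕ)) *
      g (x k) (σ₁ ^ 2 + ((φ k : ℕ) : ℝ) * σ₂ ^ 2)) :
    L β < L α := by
  obtain ⟨hρ0, hρ1⟩ := hρ
  have hρ1' : 0 < 1 - ρ := by linarith
  set f : (Fin N → Fin 2) → Fin N → ℝ := fun φ k =>
    ρ ^ (φ k : ℕ) * (1 - ρ) ^ (1 - (φ k : ℕ)) *
      g (x k) (σ₁ ^ 2 + ((φ k : ℕ) : ℝ) * σ₂ ^ 2) with hf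
  have hn' : n ∈ (univ : Finset (Fin N)).erase m := by
    simp [Finset.mem_erase, Ne.symm hmn]
  have hsplit : ∀ h : Fin N → ℝ, ∏ k, h k =
      h m * (h n * ∏ k ∈ ((univ : Finset (Fin N)).erase m).erase n, h k) := by
    intro h
    rw [← Finset.mul_prod_erase univ h (mem_univ m),
      ← Finset.mul_prod_erase _ h hn']
  have hgpos : ∀ (y v : ℝ), 0 < v → 0 < g y v := by
    intro y v hv
    rw [hg]
    have : 0 < Real.sqrt (2 * Real.pi * v) :=
      Real.sqrt_pos.mpr (by positivity)
    positivity
  have hvpos : ∀ c : ℝ, 0 ≤ c → 0 < σ₁ ^ 2 + c * σ₂ ^ 2 := by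
    intro c hc; nlinarith [sq_nonneg σ₁, sq_nonneg σ₂]
  have hCpos : 0 < ∏ k ∈ ((univ : Finset (Fin N)).erase m).erase n, f α k := by
    apply Finset.prod_pos
    intro k _
    have := hgpos (x k) (σ₁ ^ 2 + ((α k : ℕ) : ℝ) * σ₂ ^ 2)
      (hvpos _ (by positivity))
    positivity
  have hCeq : ∏ k ∈ ((univ : Finset (Fin N)).erase m).erase n, f α k =
      ∏ k ∈ ((univ : Finset (Fin N)).erase m).erase n, f β k := by
    apply Finset.prod_congr rfl
    intro k hk
    simp only [Finset.mem_erase] at hk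
    rw [hf]
    simp [hagree k hk.2.1 hk.1]
  -- core inequality
  have ha : x m ^ 2 < x n ^ 2 := by
    nlinarith [abs_nonneg (x m), sq_abs (x m), sq_abs (x n),
      mul_self_lt_mul_self (abs_nonneg (x m)) hx]
  set v0 := σ₁ ^ 2 with hv0
  set v1 := σ₁ ^ 2 + σ₂ ^ 2 with hv1
  have hv0p : 0 < v0 := by positivity
  have hv1p : 0 < v1 := by positivity
  have hvlt : v0 < v1 := by nlinarith [sq_nonneg σ₂]
  have hcore : g (x m) v1 * g (x n) v0 < g (x m) v0 * g (x n) v1 := by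
    rw [hg, hg, hg, hg]
    have hs0 : 0 < Real.sqrt (2 * Real.pi * v0) := Real.sqrt_pos.mpr (by positivity)
    have hs1 : 0 < Real.sqrt (2 * Real.pi * v1) := Real.sqrt_pos.mpr (by positivity)
    have hexp : Real.exp (-(x m ^ 2) / (2 * v1)) * Real.exp (-(x n ^ 2) / (2 * v0)) <
        Real.exp (-(x m ^ 2) / (2 * v0)) * Real.exp (-(x n ^ 2) / (2 * v1)) := by
      rw [← Real.exp_add, ← Real.exp_add]
      apply Real.exp_lt_exp.mpr
      have hkey : (-(x m ^ 2) / (2 * v0) + -(x n ^ 2) / (2 * v1)) -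
          (-(x m ^ 2) / (2 * v1) + -(x n ^ 2) / (2 * v0)) =
          (x n ^ 2 - x m ^ 2) * (v1 - v0) / (2 * v0 * v1) := by
        field_simp
        ring
      have hpos : 0 < (x n ^ 2 - x m ^ 2) * (v1 - v0) / (2 * v0 * v1) := by
        apply div_pos
        · exact mul_pos (by linarith) (by linarith)
        · positivity
      linarith [hkey ▸ hpos]
    calc (Real.sqrt (2 * Real.pi * v1))⁻¹ * Real.exp (-(x m ^ 2) / (2 * v1)) *
          ((Real.sqrt (2 * Real.pi * v0))⁻¹ * Real.exp (-(x n ^ 2) / (2 * v0)))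
        = ((Real.sqrt (2 * Real.pi * v0))⁻¹ * (Real.sqrt (2 * Real.pi * v1))⁻¹) *
          (Real.exp (-(x m ^ 2) / (2 * v1)) * Real.exp (-(x n ^ 2) / (2 * v0))) := by ring
      _ < ((Real.sqrt (2 * Real.pi * v0))⁻¹ * (Real.sqrt (2 * Real.pi * v1))⁻¹) *
          (Real.exp (-(x m ^ 2) / (2 * v0)) * Real.exp (-(x n ^ 2) / (2 * v1))) := by
          apply mul_lt_mul_of_pos_left hexp (by positivity)
      _ = (Real.sqrt (2 * Real.pi * v0))⁻¹ * Real.exp (-(x m ^ 2) / (2 * v0)) *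
          ((Real.sqrt (2 * Real.pi * v1))⁻¹ * Real.exp (-(x n ^ 2) / (2 * v1))) := by ring
  have hfαm : f α m = (1 - ρ) * g (x m) v0 := by
    rw [hf]; simp [hαm, hv0]
  have hfαn : f α n = ρ * g (x n) v1 := by
    rw [hf]; simp [hαn, hv1, hv0]
  have hfβm : f β m = ρ * g (x m) v1 := by
    rw [hf]; simp [hβm, hv1, hv0]
  have hfβn : f β n = (1 - ρ) * g (x n) v0 := by
    rw [hf]; simp [hβn, hv0]
  rw [hL, hL]
  rw [show (∏ k, ρ ^ (α k : ℕ) * (1 - ρ) ^ (1 - (α k : ℕ)) *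
      g (x k) (σ₁ ^ 2 + ((α k : ℕ) : ℝ) * σ₂ ^ 2)) = ∏ k, f α k from rfl,
    show (∏ k, ρ ^ (β k : ℕ) * (1 - ρ) ^ (1 - (β k : ℕ)) *
      g (x k) (σ₁ ^ 2 + ((β k : ℕ) : ℝ) * σ₂ ^ 2)) = ∏ k, f β k from rfl]
  rw [hsplit (f α), hsplit (f β), ← hCeq, hfαm, hfαn, hfβm, hfβn]
  have := mul_lt_mul_of_pos_left hcore (mul_pos hρ0 hρ1')
  nlinarith [hCpos, this]
end
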